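/- The conjunction of statements (A) and (B) is equivalent to statement (**). -/

import Mathlib

noncomputable section

abbrev Ordi : Type 1 := Ordinal.{0}

/-- The ordinal `ω₁`. -/
def w1 : Ordi := (Cardinal.aleph 1).ord

/-- The ordinal `ω₂`. -/
def w2 : Ordi := (Cardinal.aleph 2).ord

/-- `C` is a club (closed and unbounded) subset of `κ`. -/
def IsClubIn (C : Set Ordi) (κ : Ordi) : Prop :=
  C ⊆ Set.Iio κ ∧ (∀ α < κ, ∃ β ∈ C, α ≤ β) ∧
    ∀ α, 0 < α → α < κ → (∀ β < α, ∃ γ ∈ C, β < γ ∧ γ < α) → α ∈ C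

/-- `S` is a stationary subset of `κ`: it meets every club subset of `κ`. -/
def IsStationaryIn (S : Set Ordi) (κ : Ordi) : Prop :=
  S ⊆ Set.Iio κ ∧ ∀ C : Set Ordi, IsClubIn C κ → (S ∩ C).Nonempty

/-- `S²₁`: the set of ordinals below `ω₂` of cofinality `ω₁`. -/
def S21 : Set Ordi := {α | α < w2 ∧ Ordinal.cof α = Cardinal.aleph 1}

/-- Statement (A): any family of at most `ω₂`-many club subsets of `ω₁` can be
diagonalized. -/
def StatementA : Prop :=
  ∀ 𝒞 : Set (Set Ordi), (∀ C ∈ 𝒞, IsClubIn C w1) →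
    Cardinal.mk ↥𝒞 ≤ Cardinal.aleph 2 →
    ∃ E : Set Ordi, IsClubIn E w1 ∧ ∀ C ∈ 𝒞, (E \ C).Countable

/-- Statement (B): there is a sequence `⟨π_β : ω₁ ≤ β < ω₂⟩` of bijections
`π_β : β → ω₁` such that for every `g : ω₁ → ω₁` there are an injective
`h : ω₂ → ω₂` and a stationary set `I ⊆ S²₁` of ordinals closed under `h`
with the stated oscillation properties. -/
def StatementB : Prop :=
  ∃ pi : Ordi → Ordi → Ordi,
    (∀ β, w1 ≤ β → β < w2 → Set.BijOn (pi β) (Set.Iio β) (Set.Iio w1)) ∧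
    ∀ g : Ordi → Ordi, (∀ i < w1, g i < w1) →
      ∃ h : Ordi → Ordi, Set.InjOn h (Set.Iio w2) ∧ (∀ α < w2, h α < w2) ∧
        ∃ I : Set Ordi, I ⊆ S21 ∧ IsStationaryIn I w2 ∧
          (∀ β ∈ I, ∀ α < β, h α < β) ∧
          ∀ β ∈ I, ∃ D : Set Ordi, D ⊆ Set.Iio β ∧ D.Countable ∧
            (∀ α < β, α ∉ D →
              g (min (pi β α) (pi β (h α))) < max (pi β α) (pi β (h α))) ∧
            (∀ α < β, α ∉ D → ∀ γ < β, γ ∉ D → α ≠ γ →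
              g (min (pi β (h α)) (pi β (h γ))) < max (pi β (h α)) (pi β (h γ)))

/-- Statement (**): for any family `F` of at most `ω₂`-many injective functions
from `ω₂` to `ω₂` there is an injective `h : ω₂ → ω₂` such that for every
`f ∈ F` there is a countable `D ⊆ ω₂` with `f(α) ≠ h(α)` off `D` and
`f(h(α)) ≠ h(β)` for distinct `α, β` off `D`. -/
def StatementSS : Prop :=
  ∀ F : Set (Ordi → Ordi),
    (∀ f ∈ F, Set.InjOn f (Set.Iio w2) ∧ ∀ α < w2, f α < w2) →
    Cardinal.mk ↥F ≤ Cardinal.aleph 2 →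
    ∃ h : Ordi → Ordi, Set.InjOn h (Set.Iio w2) ∧ (∀ α < w2, h α < w2) ∧
      ∀ f ∈ F, ∃ D : Set Ordi, D ⊆ Set.Iio w2 ∧ D.Countable ∧
        (∀ α < w2, α ∉ D → f α ≠ h α) ∧
        (∀ α < w2, α ∉ D → ∀ β < w2, β ∉ D → α ≠ β → f (h α) ≠ h β)

namespace ABStar
open Cardinal Set Classical

def Ordinal.IsLimit (o : Ordi) : Prop := o ≠ 0 ∧ ∀ a < o, a + 1 < o

lemma Ordinal.IsLimit.pos {o : Ordi} (h : Ordinal.IsLimit o) : 0 < o :=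
  pos_iff_ne_zero.mpr h.1

lemma Cardinal.ord_isLimit {c : Cardinal.{0}} (hc : Cardinal.aleph0 ≤ c) : Ordinal.IsLimit c.ord :=
  ⟨(Order.IsSuccLimit.pos (Cardinal.isSuccLimit_ord hc)).ne',
    fun a ha => (Cardinal.isSuccLimit_ord hc).add_one_lt ha⟩

lemma aleph_two_succ : (Cardinal.aleph 2) = Order.succ (Cardinal.aleph 1) := by
  have : (2 : Ordinal) = Order.succ 1 := by rw [← Ordinal.add_one_eq_succ]; norm_num
  rw [this, Cardinal.aleph_succ]

lemma isRegular_aleph_two : (Cardinal.aleph 2).IsRegular := by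
  rw [aleph_two_succ]; exact Cardinal.isRegular_succ (Cardinal.aleph0_le_aleph 1)

lemma cof_w1 : w1.cof = Cardinal.aleph 1 := Cardinal.isRegular_aleph_one.cof_eq
lemma cof_w2 : w2.cof = Cardinal.aleph 2 := isRegular_aleph_two.cof_eq
lemma aleph0_lt_aleph1 : (Cardinal.aleph0 : Cardinal.{0}) < Cardinal.aleph 1 := by
  simpa using Cardinal.aleph_lt_aleph.mpr (zero_lt_one : (0:Ordinal) < 1)
lemma aleph1_lt_aleph2 : (Cardinal.aleph 1 : Cardinal.{0}) < Cardinal.aleph 2 :=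
  Cardinal.aleph_lt_aleph.mpr (by norm_num)
lemma w1_lt_w2 : w1 < w2 := Cardinal.ord_lt_ord.mpr aleph1_lt_aleph2
lemma w1_isLimit : Ordinal.IsLimit w1 := Cardinal.ord_isLimit (Cardinal.aleph0_le_aleph 1)
lemma w1_pos : 0 < w1 := w1_isLimit.pos
lemma w2_isLimit : Ordinal.IsLimit w2 := Cardinal.ord_isLimit (Cardinal.aleph0_le_aleph 2)
lemma w2_pos : 0 < w2 := w1_pos.trans w1_lt_w2

/-- countable subsets of ordinals: `Iic` of an ordinal below `w1` is countable. -/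
lemma countable_Iic {x : Ordi} (hx : x < w1) : (Set.Iic x).Countable := by
  have : Set.Iic x = Set.Iio (x+1) := by ext y; simp [Order.lt_add_one_iff]
  rw [this, ← Set.countable_coe_iff, ← Cardinal.mk_le_aleph0_iff, Ordinal.mk_Iio_ordinal]
  have hcard : (x+1).card < Cardinal.aleph 1 := Cardinal.lt_ord.mp (w1_isLimit.2 x hx)
  have : (x+1).card ≤ Cardinal.aleph0 := by
    have h1s : (Cardinal.aleph 1) = Order.succ (Cardinal.aleph0) := by
      have : (1 : Ordinal) = Order.succ 0 := by simp
      rw [this, Cardinal.aleph_succ, Cardinal.aleph_zero]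
    rw [h1s] at hcard; exact Order.lt_succ_iff.mp hcard
  calc Cardinal.lift.{1} (x+1).card ≤ Cardinal.lift.{1} Cardinal.aleph0 :=
        Cardinal.lift_le.mpr this
    _ = Cardinal.aleph0 := Cardinal.lift_aleph0
lemma countable_Iio {x : Ordi} (hx : x < w1) : (Set.Iio x).Countable :=
  (countable_Iic hx).mono Set.Iio_subset_Iic_self

-- sup lemmas
lemma bddAbove_of_lt {s : Set Ordi} {κ : Ordi} (h : ∀ x ∈ s, x < κ) : BddAbove s :=
  ⟨κ, fun x hx => (h x hx).le⟩

lemma sSup_lt_of_countable {s : Set Ordi} {κ : Ordi}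
    (hcof : Cardinal.aleph0 < κ.cof) (hpos : 0 < κ)
    (hsub : ∀ x ∈ s, x < κ) (hct : s.Countable) : sSup s < κ := by
  rcases s.eq_empty_or_nonempty with h | h
  · rw [h, csSup_empty]
    exact lt_of_le_of_lt bot_le hpos
  · obtain ⟨f, hf⟩ := hct.exists_eq_range h
    have hsup : iSup f < κ := by
      refine Ordinal.iSup_lt_ord ?_ ?_
      · rwa [Cardinal.mk_denumerable]
      · intro n; exact hsub _ (hf ▸ Set.mem_range_self n)
    refine lt_of_le_of_lt (csSup_le h ?_) hsup
    intro x hx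
    rw [hf] at hx
    obtain ⟨n, rfl⟩ := hx
    exact Ordinal.le_iSup f n

lemma sSup_image_lt {g : Ordi → Ordi} {δ κ : Ordi}
    (hκ : δ.card < κ.cof) (hpos : 0 < κ)
    (hv : ∀ γ < δ, g γ < κ) : sSup (g '' Set.Iio δ) < κ := by
  rcases (g '' Set.Iio δ).eq_empty_or_nonempty with h | h
  · rw [h]; simpa using hpos
  · have hb : Ordinal.bsup δ (fun a _ => g a) < κ := Ordinal.bsup_lt_ord hκ (fun i hi => hv i hi)
    refine lt_of_le_of_lt (csSup_le h ?_) hb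
    rintro x ⟨γ, hγ, rfl⟩
    exact Ordinal.le_bsup (fun a _ => g a) γ hγ
-- next element of a set
def nxt (S : Set Ordi) (x : Ordi) : Ordi := sInf {s | s ∈ S ∧ x < s}

lemma nxt_spec {S : Set Ordi} {κ : Ordi} (hub : ∀ a < κ, ∃ b ∈ S, a ≤ b)
    (hκ : Ordinal.IsLimit κ) {x : Ordi} (hx : x < κ) : nxt S x ∈ S ∧ x < nxt S x := by
  have hne : {s | s ∈ S ∧ x < s}.Nonempty := by
    obtain ⟨b, hb, hxb⟩ := hub (x + 1) (hκ.2 x hx)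
    exact ⟨b, hb, lt_of_lt_of_le (lt_add_one x) hxb⟩
  exact csInf_mem hne

-- increasing enumeration above a
def enm (S : Set Ordi) (a : Ordi) : Ordi → Ordi :=
  Ordinal.lt_wf.fix fun δ rec => nxt S (max a (sSup (Set.range fun p : Set.Iio δ => rec p.1 p.2)))

lemma enm_def (S : Set Ordi) (a δ : Ordi) :
    enm S a δ = nxt S (max a (sSup (enm S a '' Set.Iio δ))) := by
  rw [enm, WellFounded.fix_eq]
  congr 1
  rw [Set.image_eq_range]

lemma enm_spec {S : Set Ordi} {c : Cardinal.{0}} (hreg : c.IsRegular) {κ : Ordi} (hκ : κ = c.ord)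
    (hS : ∀ x ∈ S, x < κ) (hub : ∀ x < κ, ∃ b ∈ S, x ≤ b) {a : Ordi} (ha : a < κ) :
    ∀ δ < κ, enm S a δ ∈ S ∧ a < enm S a δ ∧ ∀ γ < δ, enm S a γ < enm S a δ := by
  subst hκ
  have hlim : Ordinal.IsLimit c.ord := Cardinal.ord_isLimit hreg.1
  intro δ
  induction δ using Ordinal.lt_wf.induction with
  | _ δ IH =>
    intro hδ
    have hsup : sSup (enm S a '' Set.Iio δ) < c.ord := by
      refine sSup_image_lt ?_ hlim.pos ?_
      · rw [hreg.cof_eq]; exact Cardinal.lt_ord.mp hδ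
      · intro γ hγ; exact hS _ ((IH γ hγ (hγ.trans hδ)).1)
    have hm : max a (sSup (enm S a '' Set.Iio δ)) < c.ord := max_lt ha hsup
    have hn := nxt_spec hub hlim hm
    rw [← enm_def] at hn
    refine ⟨hn.1, lt_of_le_of_lt (le_max_left _ _) hn.2, ?_⟩
    intro γ hγ
    have hle : enm S a γ ≤ sSup (enm S a '' Set.Iio δ) := by
      refine le_csSup (bddAbove_of_lt (κ := c.ord) ?_) ⟨γ, hγ, rfl⟩
      rintro x ⟨γ', hγ', rfl⟩
      exact hS _ ((IH γ' hγ' (hγ'.trans hδ)).1)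
    calc enm S a γ ≤ max a (sSup (enm S a '' Set.Iio δ)) := hle.trans (le_max_right _ _)
      _ < enm S a δ := hn.2
-- closure points of countably many functions form a club
def clSet (k : ℕ → Ordi → Ordi) (κ : Ordi) : Set Ordi :=
  {δ | δ < κ ∧ 0 < δ ∧ ∀ n : ℕ, ∀ x < δ, k n x < δ}

def clStep (k : ℕ → Ordi → Ordi) (δ : Ordi) : Ordi :=
  max (δ + 1) (sSup (Set.range fun n : ℕ => sSup (k n '' Set.Iio δ)) + 1)

lemma clStep_lt {k : ℕ → Ordi → Ordi} {c : Cardinal.{0}} (hreg : c.IsRegular)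
    (hc : Cardinal.aleph0 < c) (hk : ∀ n x, x < c.ord → k n x < c.ord) {δ : Ordi}
    (hδ : δ < c.ord) : clStep k δ < c.ord := by
  have hlim : Ordinal.IsLimit c.ord := Cardinal.ord_isLimit hreg.1
  refine max_lt (hlim.2 _ hδ) (hlim.2 _ ?_)
  refine sSup_lt_of_countable ?_ hlim.pos ?_ (Set.countable_range _)
  · rwa [hreg.cof_eq]
  · rintro x ⟨n, rfl⟩
    refine sSup_image_lt ?_ hlim.pos (fun γ hγ => hk n γ (hγ.trans hδ))
    rw [hreg.cof_eq]; exact Cardinal.lt_ord.mp hδ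

lemma self_lt_clStep {k : ℕ → Ordi → Ordi} {δ : Ordi} : δ < clStep k δ :=
  lt_of_lt_of_le (lt_add_one δ) (le_max_left _ _)

lemma apply_lt_clStep {k : ℕ → Ordi → Ordi} {c : Cardinal.{0}} (hreg : c.IsRegular)
    (hk : ∀ n x, x < c.ord → k n x < c.ord) {δ : Ordi} (hδ : δ < c.ord)
    {n : ℕ} {x : Ordi} (hx : x < δ) : k n x < clStep k δ := by
  have h1 : k n x ≤ sSup (k n '' Set.Iio δ) := by
    refine le_csSup (bddAbove_of_lt (κ := c.ord) ?_) ⟨x, hx, rfl⟩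
    rintro y ⟨γ, hγ, rfl⟩; exact hk n γ (hγ.trans hδ)
  have h2 : sSup (k n '' Set.Iio δ) ≤ sSup (Set.range fun n : ℕ => sSup (k n '' Set.Iio δ)) := by
    refine le_csSup (bddAbove_of_lt (κ := c.ord) ?_) ⟨n, rfl⟩
    rintro y ⟨m, rfl⟩
    refine sSup_image_lt ?_ (Cardinal.ord_isLimit hreg.1).pos (fun γ hγ => hk m γ (hγ.trans hδ))
    rw [hreg.cof_eq]; exact Cardinal.lt_ord.mp hδ
  calc k n x ≤ _ := h1.trans h2
    _ < _ + 1 := lt_add_one _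
    _ ≤ clStep k δ := le_max_right _ _

lemma isClubIn_clSet {k : ℕ → Ordi → Ordi} {c : Cardinal.{0}} (hreg : c.IsRegular)
    (hc : Cardinal.aleph0 < c) (hk : ∀ n x, x < c.ord → k n x < c.ord) :
    IsClubIn (clSet k c.ord) c.ord := by
  have hlim : Ordinal.IsLimit c.ord := Cardinal.ord_isLimit hreg.1
  refine ⟨fun δ hδ => hδ.1, ?_, ?_⟩
  · -- unbounded
    intro a ha
    set d : ℕ → Ordi := fun m => (clStep k)^[m] (a + 1) with hd
    have hdsucc : ∀ m, d (m + 1) = clStep k (d m) := by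
      intro m; rw [hd]; simp [Function.iterate_succ_apply']
    have hdlt : ∀ m, d m < c.ord := by
      intro m
      induction m with
      | zero => exact hlim.2 _ ha
      | succ m ih => rw [hdsucc]; exact clStep_lt hreg hc hk ih
    have hdmono : ∀ m, d m < d (m + 1) := by
      intro m; rw [hdsucc]; exact self_lt_clStep
    set δ' := sSup (Set.range d) with hδ'
    have hbdd : BddAbove (Set.range d) := bddAbove_of_lt (κ := c.ord) (by rintro x ⟨m, rfl⟩; exact hdlt m)
    have hδ'lt : δ' < c.ord := by
      refine sSup_lt_of_countable ?_ hlim.pos ?_ (Set.countable_range _)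
      · rwa [hreg.cof_eq]
      · rintro x ⟨m, rfl⟩; exact hdlt m
    have hled : ∀ m, d m ≤ δ' := fun m => le_csSup hbdd ⟨m, rfl⟩
    refine ⟨δ', ⟨hδ'lt, ?_, ?_⟩, ?_⟩
    · have : (0:Ordi) < a + 1 := lt_of_le_of_lt (zero_le (a := a)) (lt_add_one a)
      exact lt_of_lt_of_le this (hled 0)
    · intro n x hx
      obtain ⟨y, ⟨m, rfl⟩, hxy⟩ := exists_lt_of_lt_csSup (Set.range_nonempty d) hx
      calc k n x < clStep k (d m) := apply_lt_clStep hreg hk (hdlt m) hxy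
        _ = d (m + 1) := (hdsucc m).symm
        _ ≤ δ' := hled (m + 1)
    · exact le_of_lt (lt_of_lt_of_le (lt_add_one a) (hled 0))
  · -- closed
    intro δ hpos hδ happ
    refine ⟨hδ, hpos, ?_⟩
    intro n x hx
    obtain ⟨γ, hγ, hxγ, hγδ⟩ := happ x hx
    exact lt_trans (hγ.2.2 n x hxγ) hγδ
-- elementary club facts
lemma isClubIn_Iio {κ : Ordi} : IsClubIn (Set.Iio κ) κ :=
  ⟨fun _ h => h, fun α hα => ⟨α, hα, le_refl α⟩, fun α _ hα _ => hα⟩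

lemma isClubIn_tail {x κ : Ordi} (hκ : Ordinal.IsLimit κ) (hx : x < κ) :
    IsClubIn {γ | x < γ ∧ γ < κ} κ := by
  refine ⟨fun γ hγ => hγ.2, ?_, ?_⟩
  · intro a ha
    refine ⟨max a (x + 1), ⟨?_, max_lt ha (hκ.2 x hx)⟩, le_max_left _ _⟩
    exact lt_of_lt_of_le (lt_add_one x) (le_max_right _ _)
  · intro δ hpos hδ happ
    obtain ⟨γ, hγ, _, hγδ⟩ := happ 0 hpos
    exact ⟨lt_trans hγ.1 hγδ, hδ⟩

lemma isClubIn_inter {C C' : Set Ordi} {c : Cardinal.{0}} (hreg : c.IsRegular)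
    (hc : Cardinal.aleph0 < c) (h1 : IsClubIn C c.ord) (h2 : IsClubIn C' c.ord) :
    IsClubIn (C ∩ C') c.ord := by
  have hlim : Ordinal.IsLimit c.ord := Cardinal.ord_isLimit hreg.1
  refine ⟨fun δ hδ => h1.1 hδ.1, ?_, ?_⟩
  · intro a ha
    set d : ℕ → Ordi := fun m => (fun δ => nxt C' (nxt C δ))^[m] a with hd
    have hdsucc : ∀ m, d (m + 1) = nxt C' (nxt C (d m)) := by
      intro m; rw [hd]; simp [Function.iterate_succ_apply']
    have step : ∀ {δ : Ordi}, δ < c.ord →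
        (nxt C δ ∈ C ∧ δ < nxt C δ ∧ nxt C δ < c.ord) ∧
        (nxt C' (nxt C δ) ∈ C' ∧ nxt C δ < nxt C' (nxt C δ) ∧ nxt C' (nxt C δ) < c.ord) := by
      intro δ hδ
      have hu := nxt_spec h1.2.1 hlim hδ
      have huκ : nxt C δ < c.ord := h1.1 hu.1
      have hv := nxt_spec h2.2.1 hlim huκ
      exact ⟨⟨hu.1, hu.2, huκ⟩, hv.1, hv.2, h2.1 hv.1⟩
    have hdlt : ∀ m, d m < c.ord := by
      intro m
      induction m with
      | zero => exact ha
      | succ m ih => rw [hdsucc]; exact ((step ih).2).2.2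
    have hdmono : ∀ m, d m < d (m + 1) := by
      intro m
      rw [hdsucc]
      exact lt_trans ((step (hdlt m)).1).2.1 ((step (hdlt m)).2).2.1
    set δ' := sSup (Set.range d) with hδ'
    have hbdd : BddAbove (Set.range d) :=
      bddAbove_of_lt (κ := c.ord) (by rintro x ⟨m, rfl⟩; exact hdlt m)
    have hled : ∀ m, d m ≤ δ' := fun m => le_csSup hbdd ⟨m, rfl⟩
    have hδ'lt : δ' < c.ord := by
      refine sSup_lt_of_countable ?_ hlim.pos ?_ (Set.countable_range _)
      · rwa [hreg.cof_eq]
      · rintro x ⟨m, rfl⟩; exact hdlt m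
    have hpos : 0 < δ' := by
      refine lt_of_lt_of_le ?_ (hled 1)
      rw [hdsucc]
      exact lt_of_le_of_lt (zero_le (a := d 0)) (lt_trans ((step (hdlt 0)).1).2.1 ((step (hdlt 0)).2).2.1)
    have happrox : ∀ x < δ', ∃ m, x < d m := by
      intro x hx
      obtain ⟨y, ⟨m, rfl⟩, hxy⟩ := exists_lt_of_lt_csSup (Set.range_nonempty d) hx
      exact ⟨m, hxy⟩
    have hmemC : δ' ∈ C := by
      refine h1.2.2 δ' hpos hδ'lt ?_
      intro x hx
      obtain ⟨m, hm⟩ := happrox x hx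
      refine ⟨nxt C (d m), ((step (hdlt m)).1).1, lt_trans hm ((step (hdlt m)).1).2.1, ?_⟩
      calc nxt C (d m) < nxt C' (nxt C (d m)) := ((step (hdlt m)).2).2.1
        _ = d (m+1) := (hdsucc m).symm
        _ ≤ δ' := hled (m+1)
    have hmemC' : δ' ∈ C' := by
      refine h2.2.2 δ' hpos hδ'lt ?_
      intro x hx
      obtain ⟨m, hm⟩ := happrox x hx
      refine ⟨d (m+1), by rw [hdsucc]; exact ((step (hdlt m)).2).1, ?_, ?_⟩
      · calc x < d m := hm
          _ < d (m+1) := hdmono m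
      · calc d (m+1) < d (m+2) := hdmono (m+1)
          _ ≤ δ' := hled (m+2)
    exact ⟨δ', ⟨hmemC, hmemC'⟩, (hled 0)⟩
  · intro δ hpos hδ happ
    constructor
    · refine h1.2.2 δ hpos hδ ?_
      intro x hx
      obtain ⟨γ, hγ, h1', h2'⟩ := happ x hx
      exact ⟨γ, hγ.1, h1', h2'⟩
    · refine h2.2.2 δ hpos hδ ?_
      intro x hx
      obtain ⟨γ, hγ, h1', h2'⟩ := happ x hx
      exact ⟨γ, hγ.2, h1', h2'⟩
-- countability helpers
lemma aleph_one_succ_a0 : (Cardinal.aleph 1 : Cardinal.{0}) = Order.succ Cardinal.aleph0 := by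
  have : (1 : Ordinal) = Order.succ 0 := by simp
  rw [this, Cardinal.aleph_succ, Cardinal.aleph_zero]

lemma not_countable_Iio_w1 : ¬ (Set.Iio w1).Countable := by
  intro h
  rw [← Set.countable_coe_iff, ← Cardinal.mk_le_aleph0_iff, Ordinal.mk_Iio_ordinal] at h
  rw [show w1.card = Cardinal.aleph 1 from Cardinal.card_ord _, ← Cardinal.lift_aleph0.{1,0},
    Cardinal.lift_le] at h
  exact absurd h (not_le.mpr aleph0_lt_aleph1)

lemma countable_of_image_countable {u : Ordi → Ordi} {S : Set Ordi}
    (hinj : Set.InjOn u S) (h : (u '' S).Countable) : S.Countable := by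
  obtain ⟨f, hf⟩ := Set.countable_iff_exists_injOn.mp h
  refine Set.countable_iff_exists_injOn.mpr ⟨f ∘ u, ?_⟩
  intro x hx y hy hxy
  exact hinj hx hy (hf (Set.mem_image_of_mem u hx) (Set.mem_image_of_mem u hy) hxy)

lemma not_countable_image {u : Ordi → Ordi} {S : Set Ordi}
    (hinj : Set.InjOn u S) (h : ¬ S.Countable) : ¬ (u '' S).Countable :=
  fun hc => h (countable_of_image_countable hinj hc)

lemma unbounded_of_not_countable {R : Set Ordi} (h : ¬ R.Countable) :
    ∀ x < w1, ∃ r ∈ R, x < r := by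
  intro x hx
  by_contra hcon
  push_neg at hcon
  exact h (((countable_Iic hx).mono (fun r hr => hcon r hr)))

-- a point of cofinality ω₁ inside any club of w2
lemma exists_cof_w1_point {C : Set Ordi} (hC : IsClubIn C w2) :
    ∃ δ ∈ C, δ < w2 ∧ δ.cof = Cardinal.aleph 1 := by
  have hw2 : w2 = (Cardinal.aleph 2).ord := rfl
  set e : Ordi → Ordi := enm C 0 with he
  have hspec : ∀ δ < w2, e δ ∈ C ∧ 0 < e δ ∧ ∀ γ < δ, e γ < e δ :=
    enm_spec isRegular_aleph_two hw2 (fun x hx => hC.1 hx) hC.2.1 w2_pos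
  have hvals : ∀ γ < w1, e γ < w2 := fun γ hγ => hC.1 (hspec γ (hγ.trans w1_lt_w2)).1
  set δ' := sSup (e '' Set.Iio w1) with hδ'
  have hbdd : BddAbove (e '' Set.Iio w1) :=
    bddAbove_of_lt (κ := w2) (by rintro x ⟨γ, hγ, rfl⟩; exact hvals γ hγ)
  have hlt : δ' < w2 := by
    refine sSup_image_lt ?_ w2_pos hvals
    rw [show w2.cof = Cardinal.aleph 2 from cof_w2,
      show w1.card = Cardinal.aleph 1 from Cardinal.card_ord _]
    exact aleph1_lt_aleph2
  have hles : ∀ γ < w1, e γ ≤ δ' := fun γ hγ => le_csSup hbdd ⟨γ, hγ, rfl⟩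
  have hstrict : ∀ γ < w1, e γ < δ' := by
    intro γ hγ
    have hγ1 : γ + 1 < w1 := w1_isLimit.2 γ hγ
    exact lt_of_lt_of_le ((hspec (γ+1) (hγ1.trans w1_lt_w2)).2.2 γ (lt_add_one γ)) (hles _ hγ1)
  have hne : (e '' Set.Iio w1).Nonempty := ⟨e 0, 0, w1_pos, rfl⟩
  have happx : ∀ x < δ', ∃ γ, γ < w1 ∧ x < e γ := by
    intro x hx
    obtain ⟨y, ⟨γ, hγ, rfl⟩, hxy⟩ := exists_lt_of_lt_csSup hne hx
    exact ⟨γ, hγ, hxy⟩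
  have hpos : 0 < δ' := lt_of_lt_of_le (hspec 0 w2_pos).2.1 (hles 0 w1_pos)
  have hmem : δ' ∈ C := by
    refine hC.2.2 δ' hpos hlt ?_
    intro x hx
    obtain ⟨γ, hγ, hxγ⟩ := happx x hx
    exact ⟨e γ, (hspec γ (hγ.trans w1_lt_w2)).1, hxγ, hstrict γ hγ⟩
  have hblsub : Ordinal.blsub w1 (fun γ _ => e γ) = δ' := by
    refine le_antisymm (Ordinal.blsub_le_iff.mpr (fun γ h => hstrict γ h)) (csSup_le hne ?_)
    rintro y ⟨γ, hγ, rfl⟩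
    exact (Ordinal.lt_blsub _ γ hγ).le
  have hupper : δ'.cof ≤ Cardinal.aleph 1 := by
    have := Ordinal.cof_blsub_le (fun γ (_ : γ < w1) => e γ)
    rw [hblsub, show w1.card = Cardinal.aleph 1 from Cardinal.card_ord _] at this
    exact this
  have hlower : ¬ δ'.cof ≤ Cardinal.aleph0 := by
    intro hle
    obtain ⟨F, hF⟩ := Ordinal.exists_fundamental_sequence δ'
    have hlamcard : (δ'.cof.ord).card ≤ Cardinal.aleph0 := by
      rw [Cardinal.card_ord]; exact hle
    have hFlt : ∀ b (hb : b < δ'.cof.ord), F b hb < δ' := by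
      intro b hb
      have := Ordinal.lt_blsub F b hb
      rwa [hF.2.2] at this
    set G : Ordi → Ordi := fun b => sInf {γ | γ < w1 ∧ ∀ hb : b < δ'.cof.ord, F b hb < e γ} with hGdef
    have hG : ∀ b (hb : b < δ'.cof.ord), G b < w1 ∧ F b hb < e (G b) := by
      intro b hb
      have hne2 : {γ | γ < w1 ∧ ∀ hb : b < δ'.cof.ord, F b hb < e γ}.Nonempty := by
        obtain ⟨γ, hγ, hxγ⟩ := happx _ (hFlt b hb)
        exact ⟨γ, hγ, fun _ => hxγ⟩
      have := csInf_mem hne2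
      exact ⟨this.1, this.2 hb⟩
    set γ' := sSup ((fun b => G b + 1) '' Set.Iio δ'.cof.ord) with hγ'
    have hγ'lt : γ' < w1 := by
      refine sSup_image_lt ?_ w1_pos ?_
      · rw [show w1.cof = Cardinal.aleph 1 from cof_w1]
        exact lt_of_le_of_lt hlamcard aleph0_lt_aleph1
      · intro b hb
        exact w1_isLimit.2 _ (hG b hb).1
    have hγ'big : ∀ b (hb : b < δ'.cof.ord), F b hb < e γ' := by
      intro b hb
      have hGb : G b < γ' := by
        refine lt_of_lt_of_le (lt_add_one (G b)) (le_csSup ?_ ⟨b, hb, rfl⟩)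
        refine bddAbove_of_lt (κ := w1) ?_
        rintro x ⟨b', hb', rfl⟩
        exact w1_isLimit.2 _ (hG b' hb').1
      exact lt_trans (hG b hb).2 ((hspec γ' (hγ'lt.trans w1_lt_w2)).2.2 (G b) hGb)
    have : δ' ≤ e γ' := by
      rw [← hF.2.2]
      exact Ordinal.blsub_le_iff.mpr hγ'big
    exact absurd this (not_le.mpr (hstrict γ' hγ'lt))
  refine ⟨δ', hmem, hlt, le_antisymm hupper ?_⟩
  rw [aleph_one_succ_a0]
  exact Order.succ_le_of_lt (not_le.mp hlower)
-- uncountable sets have an uncountable initial part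
lemma exists_uncountable_initial {S : Set Ordi} (hS : S ⊆ Set.Iio w2) (h : ¬ S.Countable) :
    ∃ β < w2, ¬ (S ∩ Set.Iio β).Countable := by
  by_contra hcon
  push_neg at hcon
  by_cases hb : ∃ x < w2, ∀ s ∈ S, s ≤ x
  · obtain ⟨x, hx, hxb⟩ := hb
    have hsub : S ⊆ S ∩ Set.Iio (x + 1) :=
      fun s hs => ⟨hs, lt_of_le_of_lt (hxb s hs) (lt_add_one x)⟩
    exact h ((hcon (x+1) (w2_isLimit.2 x hx)).mono hsub)
  · push_neg at hb
    have hub : ∀ x < w2, ∃ s ∈ S, x ≤ s := by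
      intro x hx
      obtain ⟨s, hs, hxs⟩ := hb x hx
      exact ⟨s, hs, hxs.le⟩
    have hspec : ∀ δ < w2, enm S 0 δ ∈ S ∧ 0 < enm S 0 δ ∧ ∀ γ < δ, enm S 0 γ < enm S 0 δ :=
      enm_spec isRegular_aleph_two rfl (fun x hx => hS hx) hub w2_pos
    set X := enm S 0 '' Set.Iio w1 with hX
    have hvals : ∀ γ < w1, enm S 0 γ < w2 := fun γ hγ => hS (hspec γ (hγ.trans w1_lt_w2)).1
    have hXlt : sSup X < w2 := by
      refine sSup_image_lt ?_ w2_pos hvals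
      rw [show w2.cof = Cardinal.aleph 2 from cof_w2,
        show w1.card = Cardinal.aleph 1 from Cardinal.card_ord _]
      exact aleph1_lt_aleph2
    have hXb : X ⊆ S ∩ Set.Iio (sSup X + 1) := by
      rintro s ⟨γ, hγ, rfl⟩
      refine ⟨(hspec γ (hγ.trans w1_lt_w2)).1, ?_⟩
      have : enm S 0 γ ≤ sSup X := le_csSup (bddAbove_of_lt (κ := w2)
        (by rintro x ⟨γ', hγ', rfl⟩; exact hvals γ' hγ')) ⟨γ, hγ, rfl⟩
      exact lt_of_le_of_lt this (lt_add_one _)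
    have hXc : X.Countable := ((hcon _ (w2_isLimit.2 _ hXlt)).mono hXb)
    have hinj : Set.InjOn (enm S 0) (Set.Iio w1) := by
      intro x hx y hy hxy
      rcases lt_trichotomy x y with hlt | heq | hlt
      · exact absurd hxy (ne_of_lt ((hspec y (hy.trans w1_lt_w2)).2.2 x hlt))
      · exact heq
      · exact absurd hxy.symm (ne_of_lt ((hspec x (hx.trans w1_lt_w2)).2.2 y hlt))
    exact not_countable_Iio_w1 (countable_of_image_countable hinj hXc)

-- the bijections between Iio β and Iio w1
lemma iio_equiv {β : Ordi} (h1 : w1 ≤ β) (h2 : β < w2) :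
    Nonempty (↥(Set.Iio β) ≃ ↥(Set.Iio w1)) := by
  refine Cardinal.eq.mp ?_
  rw [Ordinal.mk_Iio_ordinal, Ordinal.mk_Iio_ordinal]
  congr 1
  have hle : Cardinal.aleph 1 ≤ β.card := Cardinal.ord_le.mp h1
  have hlt : β.card < Cardinal.aleph 2 := Cardinal.lt_ord.mp h2
  rw [aleph_two_succ] at hlt
  rw [le_antisymm (Order.lt_succ_iff.mp hlt) hle]
  exact (Cardinal.card_ord _).symm

def qf (β : Ordi) : Ordi → Ordi := fun α =>
  if h : w1 ≤ β ∧ β < w2 ∧ α < β then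
    ((Classical.choice (iio_equiv h.1 h.2.1)) ⟨α, h.2.2⟩ : ↥(Set.Iio w1)).1
  else 0

def qg (β : Ordi) : Ordi → Ordi := fun y =>
  if h : w1 ≤ β ∧ β < w2 ∧ y < w1 then
    ((Classical.choice (iio_equiv h.1 h.2.1)).symm ⟨y, h.2.2⟩ : ↥(Set.Iio β)).1
  else 0

section qlemmas
variable {β : Ordi}

lemma qf_eq (h1 : w1 ≤ β) (h2 : β < w2) {α : Ordi} (hα : α < β) :
    qf β α = ((Classical.choice (iio_equiv h1 h2)) ⟨α, hα⟩ : ↥(Set.Iio w1)).1 := by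
  unfold qf; rw [dif_pos ⟨h1, h2, hα⟩]

lemma qg_eq (h1 : w1 ≤ β) (h2 : β < w2) {y : Ordi} (hy : y < w1) :
    qg β y = ((Classical.choice (iio_equiv h1 h2)).symm ⟨y, hy⟩ : ↥(Set.Iio β)).1 := by
  unfold qg; rw [dif_pos ⟨h1, h2, hy⟩]

lemma qf_lt (h1 : w1 ≤ β) (h2 : β < w2) {α : Ordi} (hα : α < β) : qf β α < w1 := by
  rw [qf_eq h1 h2 hα]; exact ((Classical.choice (iio_equiv h1 h2)) ⟨α, hα⟩).2

lemma qg_lt (h1 : w1 ≤ β) (h2 : β < w2) {y : Ordi} (hy : y < w1) : qg β y < β := by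
  rw [qg_eq h1 h2 hy]; exact ((Classical.choice (iio_equiv h1 h2)).symm ⟨y, hy⟩).2

lemma qg_qf (h1 : w1 ≤ β) (h2 : β < w2) {α : Ordi} (hα : α < β) : qg β (qf β α) = α := by
  rw [qg_eq h1 h2 (qf_lt h1 h2 hα)]
  have heq : (⟨qf β α, qf_lt h1 h2 hα⟩ : ↥(Set.Iio w1))
      = (Classical.choice (iio_equiv h1 h2)) ⟨α, hα⟩ := Subtype.ext (qf_eq h1 h2 hα)
  rw [heq, Equiv.symm_apply_apply]

lemma qf_qg (h1 : w1 ≤ β) (h2 : β < w2) {y : Ordi} (hy : y < w1) : qf β (qg β y) = y := by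
  rw [qf_eq h1 h2 (qg_lt h1 h2 hy)]
  have heq : (⟨qg β y, qg_lt h1 h2 hy⟩ : ↥(Set.Iio β))
      = (Classical.choice (iio_equiv h1 h2)).symm ⟨y, hy⟩ := Subtype.ext (qg_eq h1 h2 hy)
  rw [heq, Equiv.apply_symm_apply]

lemma qf_injOn (h1 : w1 ≤ β) (h2 : β < w2) : Set.InjOn (qf β) (Set.Iio β) := by
  intro x hx y hy hxy
  have := congrArg (qg β) hxy
  rwa [qg_qf h1 h2 hx, qg_qf h1 h2 hy] at this

lemma qf_bijOn (h1 : w1 ≤ β) (h2 : β < w2) : Set.BijOn (qf β) (Set.Iio β) (Set.Iio w1) := by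
  refine ⟨fun α hα => qf_lt h1 h2 hα, qf_injOn h1 h2, ?_⟩
  intro y hy
  exact ⟨qg β y, qg_lt h1 h2 hy, qf_qg h1 h2 hy⟩

end qlemmas
-- bad-pair graph machinery
def Gr (gh : Ordi → Ordi) (x y : Ordi) : Prop := x < y ∧ y ≤ gh x ∧ y < w1

lemma secL_countable {gh : Ordi → Ordi} (hgh : ∀ x, gh x < w1) (x : Ordi) :
    {y | Gr gh x y}.Countable :=
  (countable_Iic (hgh x)).mono (fun y hy => hy.2.1)

lemma secR_countable {gh : Ordi → Ordi} (y : Ordi) : {x | Gr gh x y}.Countable := by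
  by_cases hy : y < w1
  · exact (countable_Iic hy).mono (fun x hx => hx.1.le)
  · have he : {x | Gr gh x y} = ∅ :=
      Set.eq_empty_iff_forall_notMem.mpr (fun x hx => hy hx.2.2)
    rw [he]; exact Set.countable_empty

def eL (gh : Ordi → Ordi) (x : Ordi) : Ordi → ℕ :=
  if h : {y | Gr gh x y}.Countable then Classical.choose (Set.countable_iff_exists_injOn.mp h)
  else fun _ => 0

def eR (gh : Ordi → Ordi) (y : Ordi) : Ordi → ℕ :=
  if h : {x | Gr gh x y}.Countable then Classical.choose (Set.countable_iff_exists_injOn.mp h)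
  else fun _ => 0

lemma eL_injOn {gh : Ordi → Ordi} {x : Ordi} (h : {y | Gr gh x y}.Countable) :
    Set.InjOn (eL gh x) {y | Gr gh x y} := by
  rw [eL, dif_pos h]
  exact Classical.choose_spec (Set.countable_iff_exists_injOn.mp h)

lemma eR_injOn {gh : Ordi → Ordi} {y : Ordi} (h : {x | Gr gh x y}.Countable) :
    Set.InjOn (eR gh y) {x | Gr gh x y} := by
  rw [eR, dif_pos h]
  exact Classical.choose_spec (Set.countable_iff_exists_injOn.mp h)

def TEdge (gh : Ordi → Ordi) (i j : ℕ) (x y : Ordi) : Prop :=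
  Gr gh x y ∧ eL gh x y = i ∧ eR gh y x = j

lemma tedge_of_gr {gh : Ordi → Ordi} {x y : Ordi} (h : Gr gh x y) :
    TEdge gh (eL gh x y) (eR gh y x) x y := ⟨h, rfl, rfl⟩

lemma tedge_unique_y {gh : Ordi → Ordi} (hgh : ∀ x, gh x < w1) {i j : ℕ} {x y y' : Ordi}
    (h : TEdge gh i j x y) (h' : TEdge gh i j x y') : y = y' :=
  eL_injOn (secL_countable hgh x) h.1 h'.1 (h.2.1.trans h'.2.1.symm)

lemma tedge_unique_x {gh : Ordi → Ordi} {i j : ℕ} {x x' y : Ordi}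
    (h : TEdge gh i j x y) (h' : TEdge gh i j x' y) : x = x' :=
  eR_injOn (secR_countable y) h.1 h'.1 (h.2.2.trans h'.2.2.symm)

-- ordinal arithmetic helper
lemma add_lt_w2 {β α : Ordi} (hβ : β < w2) (hα : α < w2) : β + α < w2 := by
  rw [show w2 = (Cardinal.aleph 2).ord from rfl, Cardinal.lt_ord, Ordinal.card_add]
  exact Cardinal.add_lt_of_lt (Cardinal.aleph0_le_aleph 2)
    (Cardinal.lt_ord.mp hβ) (Cardinal.lt_ord.mp hα)

-- the catching functions
def catchF (gh : Ordi → Ordi) (β : Ordi) (i j : ℕ) : Ordi → Ordi := fun α =>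
  if h : w1 ≤ β ∧ β < w2 ∧ α < β ∧ ∃ y, TEdge gh i j (qf β α) y then
    qg β (Classical.choose h.2.2.2)
  else β + α

def catchG (gh : Ordi → Ordi) (β : Ordi) (i j : ℕ) : Ordi → Ordi := fun α =>
  if h : w1 ≤ β ∧ β < w2 ∧ α < β ∧ ∃ x, TEdge gh i j x (qf β α) then
    qg β (Classical.choose h.2.2.2)
  else β + α

section catchlem
variable {gh : Ordi → Ordi} {β : Ordi} {i j : ℕ}

lemma catchF_eq (hgh : ∀ x, gh x < w1) (h1 : w1 ≤ β) (h2 : β < w2) {α y : Ordi} (hα : α < β)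
    (hT : TEdge gh i j (qf β α) y) : catchF gh β i j α = qg β y := by
  unfold catchF
  rw [dif_pos ⟨h1, h2, hα, y, hT⟩]
  congr 1
  exact tedge_unique_y hgh (Classical.choose_spec (⟨y, hT⟩ : ∃ y, TEdge gh i j (qf β α) y)) hT

lemma catchG_eq (h1 : w1 ≤ β) (h2 : β < w2) {α x : Ordi} (hα : α < β)
    (hT : TEdge gh i j x (qf β α)) : catchG gh β i j α = qg β x := by
  unfold catchG
  rw [dif_pos ⟨h1, h2, hα, x, hT⟩]
  congr 1
  exact tedge_unique_x (Classical.choose_spec (⟨x, hT⟩ : ∃ x, TEdge gh i j x (qf β α))) hT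

lemma catchF_lt (h2 : β < w2) {α : Ordi} (hα : α < w2) : catchF gh β i j α < w2 := by
  unfold catchF
  split
  · rename_i h
    have hy := Classical.choose_spec h.2.2.2
    exact lt_trans (qg_lt h.1 h.2.1 hy.1.2.2) h2
  · exact add_lt_w2 h2 hα

lemma catchG_lt (h2 : β < w2) {α : Ordi} (hα : α < w2) : catchG gh β i j α < w2 := by
  unfold catchG
  split
  · rename_i h
    have hx := Classical.choose_spec h.2.2.2
    have hxw1 : Classical.choose h.2.2.2 < w1 := lt_trans hx.1.1 hx.1.2.2
    exact lt_trans (qg_lt h.1 h.2.1 hxw1) h2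
  · exact add_lt_w2 h2 hα

lemma qg_injOn (h1 : w1 ≤ β) (h2 : β < w2) {y y' : Ordi} (hy : y < w1) (hy' : y' < w1)
    (h : qg β y = qg β y') : y = y' := by
  have := congrArg (qf β) h
  rwa [qf_qg h1 h2 hy, qf_qg h1 h2 hy'] at this

lemma catchF_injOn (hgh : ∀ x, gh x < w1) : Set.InjOn (catchF gh β i j) (Set.Iio w2) := by
  intro a ha b hb hab
  unfold catchF at hab
  split at hab <;> split at hab
  · rename_i h h'
    have hy := Classical.choose_spec h.2.2.2
    have hy' := Classical.choose_spec h'.2.2.2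
    have hyy : Classical.choose h.2.2.2 = Classical.choose h'.2.2.2 :=
      qg_injOn h.1 h.2.1 hy.1.2.2 hy'.1.2.2 hab
    rw [hyy] at hy
    have hx := tedge_unique_x hy hy'
    exact qf_injOn h.1 h.2.1 h.2.2.1 h'.2.2.1 hx
  · rename_i h h'
    have hy := Classical.choose_spec h.2.2.2
    have hlt : qg β (Classical.choose h.2.2.2) < β := qg_lt h.1 h.2.1 hy.1.2.2
    rw [hab] at hlt
    exact absurd hlt (not_lt.mpr (le_self_add : β ≤ β + b))
  · rename_i h h'
    have hy' := Classical.choose_spec h'.2.2.2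
    have hlt : qg β (Classical.choose h'.2.2.2) < β := qg_lt h'.1 h'.2.1 hy'.1.2.2
    rw [← hab] at hlt
    exact absurd hlt (not_lt.mpr (le_self_add : β ≤ β + a))
  · exact (add_right_inj β).mp hab

lemma catchG_injOn (hgh : ∀ x, gh x < w1) : Set.InjOn (catchG gh β i j) (Set.Iio w2) := by
  intro a ha b hb hab
  unfold catchG at hab
  split at hab <;> split at hab
  · rename_i h h'
    have hy := Classical.choose_spec h.2.2.2
    have hy' := Classical.choose_spec h'.2.2.2
    have hyy : Classical.choose h.2.2.2 = Classical.choose h'.2.2.2 :=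
      qg_injOn h.1 h.2.1 (lt_trans hy.1.1 hy.1.2.2) (lt_trans hy'.1.1 hy'.1.2.2) hab
    rw [hyy] at hy
    have hx := tedge_unique_y hgh hy hy'
    exact qf_injOn h.1 h.2.1 h.2.2.1 h'.2.2.1 hx
  · rename_i h h'
    have hy := Classical.choose_spec h.2.2.2
    have hlt : qg β (Classical.choose h.2.2.2) < β :=
      qg_lt h.1 h.2.1 (lt_trans hy.1.1 hy.1.2.2)
    rw [hab] at hlt
    exact absurd hlt (not_lt.mpr (le_self_add : β ≤ β + b))
  · rename_i h h'
    have hy' := Classical.choose_spec h'.2.2.2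
    have hlt : qg β (Classical.choose h'.2.2.2) < β :=
      qg_lt h'.1 h'.2.1 (lt_trans hy'.1.1 hy'.1.2.2)
    rw [← hab] at hlt
    exact absurd hlt (not_lt.mpr (le_self_add : β ≤ β + a))
  · exact (add_right_inj β).mp hab

end catchlem
-- cardinality of families
lemma lift_aleph2 : Cardinal.lift.{1,0} (Cardinal.aleph 2) = (Cardinal.aleph 2 : Cardinal.{1}) := by
  rw [Cardinal.lift_aleph]
  norm_num

lemma mk_Iio_w2 : #(↥(Set.Iio w2)) = (Cardinal.aleph 2 : Cardinal.{1}) := by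
  rw [Ordinal.mk_Iio_ordinal, show w2.card = Cardinal.aleph 2 from Cardinal.card_ord _, lift_aleph2]

lemma famcard {X : Type 1} (hX : #X ≤ (Cardinal.aleph 2 : Cardinal.{1})) {Y : Type 1} [Countable Y]
    (FF : (X × Y) ⊕ PUnit.{2} → (Ordi → Ordi)) : #(↥(Set.range FF)) ≤ (Cardinal.aleph 2 : Cardinal.{1}) := by
  refine le_trans Cardinal.mk_range_le ?_
  have h2 : Cardinal.aleph0 ≤ (Cardinal.aleph 2 : Cardinal.{1}) := Cardinal.aleph0_le_aleph 2
  rw [Cardinal.mk_sum, Cardinal.mk_prod]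
  simp only [Cardinal.lift_id]
  have hY : #Y ≤ (Cardinal.aleph 2 : Cardinal.{1}) := le_trans Cardinal.mk_le_aleph0 h2
  have hprod : #X * #Y ≤ (Cardinal.aleph 2 : Cardinal.{1}) := by
    refine le_trans (Cardinal.mul_le_max _ _) ?_
    simp [max_le_iff, hX, hY, h2]
  have hone : #PUnit.{2} ≤ (Cardinal.aleph 2 : Cardinal.{1}) :=
    le_trans Cardinal.mk_le_aleph0 h2
  refine le_trans (add_le_add hprod hone) ?_
  rw [Cardinal.add_eq_self h2]
def FFB (gh : Ordi → Ordi) :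
    (↥(Set.Iio w2) × ULift.{1} (ℕ × ℕ × Bool)) ⊕ PUnit.{2} → (Ordi → Ordi) := fun z =>
  match z with
  | Sum.inl (b, u) =>
      if w1 ≤ b.1 then
        cond u.down.2.2 (catchF gh b.1 u.down.1 u.down.2.1) (catchG gh b.1 u.down.1 u.down.2.1)
      else id
  | Sum.inr _ => id

lemma FFB_true {gh : Ordi → Ordi} {b : Ordi} (hb2 : b < w2) (hb1 : w1 ≤ b) (i j : ℕ) :
    FFB gh (Sum.inl (⟨b, hb2⟩, ULift.up (i, j, true))) = catchF gh b i j := by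
  have hred : FFB gh (Sum.inl ((⟨b, hb2⟩ : ↥(Set.Iio w2)), ULift.up (i, j, true)))
      = if w1 ≤ b then catchF gh b i j else id := rfl
  rw [hred, if_pos hb1]

lemma FFB_false {gh : Ordi → Ordi} {b : Ordi} (hb2 : b < w2) (hb1 : w1 ≤ b) (i j : ℕ) :
    FFB gh (Sum.inl (⟨b, hb2⟩, ULift.up (i, j, false))) = catchG gh b i j := by
  have hred : FFB gh (Sum.inl ((⟨b, hb2⟩ : ↥(Set.Iio w2)), ULift.up (i, j, false)))
      = if w1 ≤ b then catchG gh b i j else id := rfl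
  rw [hred, if_pos hb1]

lemma FFB_id (gh : Ordi → Ordi) : FFB gh (Sum.inr PUnit.unit) = id := rfl

lemma FFB_props {gh : Ordi → Ordi} (hgh : ∀ x, gh x < w1) :
    ∀ f ∈ Set.range (FFB gh), Set.InjOn f (Set.Iio w2) ∧ ∀ α < w2, f α < w2 := by
  rintro f ⟨z, rfl⟩
  rcases z with ⟨b, ⟨i, j, bo⟩⟩ | u
  · rcases bo with _ | _
    · have hred : FFB gh (Sum.inl (b, ULift.up (i, j, false)))
          = if w1 ≤ b.1 then catchG gh b.1 i j else id := rfl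
      rw [hred]
      by_cases hb1 : w1 ≤ b.1
      · rw [if_pos hb1]
        exact ⟨catchG_injOn hgh, fun α hα => catchG_lt b.2 hα⟩
      · rw [if_neg hb1]
        exact ⟨fun x _ y _ hxy => hxy, fun α hα => hα⟩
    · have hred : FFB gh (Sum.inl (b, ULift.up (i, j, true)))
          = if w1 ≤ b.1 then catchF gh b.1 i j else id := rfl
      rw [hred]
      by_cases hb1 : w1 ≤ b.1
      · rw [if_pos hb1]
        exact ⟨catchF_injOn hgh, fun α hα => catchF_lt b.2 hα⟩
      · rw [if_neg hb1]
        exact ⟨fun x _ y _ hxy => hxy, fun α hα => hα⟩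
  · exact ⟨fun x _ y _ hxy => hxy, fun α hα => hα⟩

theorem ssB (hss : StatementSS) : StatementB := by
  classical
  refine ⟨fun β => qf β, fun β hβ1 hβ2 => qf_bijOn hβ1 hβ2, ?_⟩
  intro g hg
  set gh : Ordi → Ordi := fun x => if hx : x < w1 ∧ g x < w1 then max (g x) x + 1 else 0
    with hgh_def
  have hgh : ∀ x, gh x < w1 := by
    intro x
    rw [hgh_def]
    dsimp only
    split
    · rename_i hx; exact w1_isLimit.2 _ (max_lt hx.2 hx.1)
    · exact w1_pos
  have hghx : ∀ x < w1, gh x = max (g x) x + 1 := by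
    intro x hx
    rw [hgh_def]
    dsimp only
    rw [dif_pos ⟨hx, hg x hx⟩]
  -- the family of functions to avoid
  set Fam := Set.range (FFB gh) with hFamdef
  have hmemF : ∀ (b : Ordi) (hb2 : b < w2) (hb1 : w1 ≤ b) (i j : ℕ),
      catchF gh b i j ∈ Fam ∧ catchG gh b i j ∈ Fam := by
    intro b hb2 hb1 i j
    exact ⟨⟨Sum.inl (⟨b, hb2⟩, ULift.up (i, j, true)), FFB_true hb2 hb1 i j⟩,
      ⟨Sum.inl (⟨b, hb2⟩, ULift.up (i, j, false)), FFB_false hb2 hb1 i j⟩⟩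
  have hmemId : (id : Ordi → Ordi) ∈ Fam := ⟨Sum.inr PUnit.unit, rfl⟩
  have hFam : ∀ f ∈ Fam, Set.InjOn f (Set.Iio w2) ∧ ∀ α < w2, f α < w2 := FFB_props hgh
  obtain ⟨h, hWInj, hWMap, hav⟩ := hss Fam hFam (famcard (le_of_eq mk_Iio_w2) (FFB gh))
  set Dof : (Ordi → Ordi) → Set Ordi := fun f => if hf : f ∈ Fam then (hav f hf).choose else ∅
    with hDofdef
  have hDof : ∀ f, f ∈ Fam →
      Dof f ⊆ Set.Iio w2 ∧ (Dof f).Countable ∧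
      (∀ α < w2, α ∉ Dof f → f α ≠ h α) ∧
      (∀ α < w2, α ∉ Dof f → ∀ γ < w2, γ ∉ Dof f → α ≠ γ → f (h α) ≠ h γ) := by
    intro f hf
    have : Dof f = (hav f hf).choose := by rw [hDofdef]; exact dif_pos hf
    rw [this]
    exact (hav f hf).choose_spec
  refine ⟨h, hWInj, hWMap, ?_⟩
  set Ch := clSet (fun _ => h) w2 with hCh
  have hChclub : IsClubIn Ch w2 :=
    isClubIn_clSet isRegular_aleph_two (lt_trans aleph0_lt_aleph1 aleph1_lt_aleph2)
      (fun _ x hx => hWMap x hx)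
  set I := S21 ∩ Ch with hI
  have hclosed : ∀ β ∈ I, ∀ α < β, h α < β := fun β hβ α hα => hβ.2.2.2 0 α hα
  refine ⟨I, Set.inter_subset_left, ⟨fun δ hδ => hδ.1.1, ?_⟩, hclosed, ?_⟩
  · -- stationarity
    intro C hC
    obtain ⟨δ, hδmem, hδlt, hδcof⟩ := exists_cof_w1_point
      (isClubIn_inter isRegular_aleph_two (lt_trans aleph0_lt_aleph1 aleph1_lt_aleph2) hC hChclub)
    exact ⟨δ, ⟨⟨hδlt, hδcof⟩, hδmem.2⟩, hδmem.1⟩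
  · intro β hβI
    have hβ2 : β < w2 := hβI.1.1
    have hβ1 : w1 ≤ β := by
      by_contra hcon
      push_neg at hcon
      have h1 : β.cof ≤ β.card := Ordinal.cof_le_card β
      have h2 : β.card < Cardinal.aleph 1 := Cardinal.lt_ord.mp hcon
      rw [hβI.1.2] at h1
      exact absurd (lt_of_le_of_lt h1 h2) (lt_irrefl _)
    set Dβ := Set.Iio β ∩ ((Dof id) ∪ ⋃ (i : ℕ), ⋃ (j : ℕ),
      (Dof (catchF gh β i j) ∪ Dof (catchG gh β i j))) with hDβ
    have hDβct : Dβ.Countable := by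
      refine Set.Countable.mono Set.inter_subset_right ?_
      refine Set.Countable.union ((hDof id hmemId).2.1) ?_
      refine Set.countable_iUnion (fun i => Set.countable_iUnion (fun j => ?_))
      exact Set.Countable.union ((hDof _ (hmemF β hβ2 hβ1 i j).1).2.1)
        ((hDof _ (hmemF β hβ2 hβ1 i j).2).2.1)
    have hsplit : ∀ α < β, α ∉ Dβ → α ∉ Dof id ∧
        ∀ i j : ℕ, α ∉ Dof (catchF gh β i j) ∧ α ∉ Dof (catchG gh β i j) := by
      intro α hα hαD
      by_contra hcon
      push_neg at hcon
      refine hαD ⟨hα, ?_⟩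
      by_cases hid : α ∈ Dof id
      · exact Or.inl hid
      · obtain ⟨i, j, hij⟩ := hcon hid
        refine Or.inr (Set.mem_iUnion.mpr ⟨i, Set.mem_iUnion.mpr ⟨j, ?_⟩⟩)
        rcases Classical.em (α ∈ Dof (catchF gh β i j)) with hF | hF
        · exact Or.inl hF
        · exact Or.inr (hij hF)
    refine ⟨Dβ, Set.inter_subset_left, hDβct, ?_, ?_⟩
    · -- condition (i)
      intro α hα hαD
      obtain ⟨hnid, hncatch⟩ := hsplit α hα hαD
      have hhαβ : h α < β := hclosed β hβI α hα
      have hxw : qf β α < w1 := qf_lt hβ1 hβ2 hα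
      have hyw : qf β (h α) < w1 := qf_lt hβ1 hβ2 hhαβ
      have hne : α ≠ h α := (hDof id hmemId).2.2.1 α (hα.trans hβ2) hnid
      have hxy : qf β α ≠ qf β (h α) := fun he => hne (qf_injOn hβ1 hβ2 hα hhαβ he)
      rcases lt_or_gt_of_ne hxy with hlt | hlt
      · rw [min_eq_left hlt.le, max_eq_right hlt.le]
        by_contra hcon
        push_neg at hcon
        have hGr : Gr gh (qf β α) (qf β (h α)) := by
          refine ⟨hlt, ?_, hyw⟩
          rw [hghx _ hxw]
          exact le_trans hcon (le_trans (le_max_left _ _) (le_of_lt (lt_add_one _)))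
        have hT := tedge_of_gr hGr
        have := catchF_eq hgh hβ1 hβ2 hα hT
        rw [qg_qf hβ1 hβ2 hhαβ] at this
        exact ((hDof _ (hmemF β hβ2 hβ1 _ _).1).2.2.1 α (hα.trans hβ2)
          ((hncatch _ _).1)) this
      · rw [min_eq_right hlt.le, max_eq_left hlt.le]
        by_contra hcon
        push_neg at hcon
        have hGr : Gr gh (qf β (h α)) (qf β α) := by
          refine ⟨hlt, ?_, hxw⟩
          rw [hghx _ hyw]
          exact le_trans hcon (le_trans (le_max_left _ _) (le_of_lt (lt_add_one _)))
        have hT := tedge_of_gr hGr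
        have := catchG_eq hβ1 hβ2 hα hT
        rw [qg_qf hβ1 hβ2 hhαβ] at this
        exact ((hDof _ (hmemF β hβ2 hβ1 _ _).2).2.2.1 α (hα.trans hβ2)
          ((hncatch _ _).2)) this
    · -- condition (ii)
      intro α hα hαD γ hγ hγD hαγ
      obtain ⟨_, hncatchα⟩ := hsplit α hα hαD
      obtain ⟨_, hncatchγ⟩ := hsplit γ hγ hγD
      have hhαβ : h α < β := hclosed β hβI α hα
      have hhγβ : h γ < β := hclosed β hβI γ hγ
      have hxw : qf β (h α) < w1 := qf_lt hβ1 hβ2 hhαβ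
      have hyw : qf β (h γ) < w1 := qf_lt hβ1 hβ2 hhγβ
      have hne : h α ≠ h γ := fun he => hαγ (hWInj (hα.trans hβ2) (hγ.trans hβ2) he)
      have hxy : qf β (h α) ≠ qf β (h γ) := fun he => hne (qf_injOn hβ1 hβ2 hhαβ hhγβ he)
      rcases lt_or_gt_of_ne hxy with hlt | hlt
      · rw [min_eq_left hlt.le, max_eq_right hlt.le]
        by_contra hcon
        push_neg at hcon
        have hGr : Gr gh (qf β (h α)) (qf β (h γ)) := by
          refine ⟨hlt, ?_, hyw⟩
          rw [hghx _ hxw]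
          exact le_trans hcon (le_trans (le_max_left _ _) (le_of_lt (lt_add_one _)))
        have hT := tedge_of_gr hGr
        have := catchF_eq hgh hβ1 hβ2 hhαβ hT
        rw [qg_qf hβ1 hβ2 hhγβ] at this
        exact ((hDof _ (hmemF β hβ2 hβ1 _ _).1).2.2.2 α (hα.trans hβ2) (hncatchα _ _).1
          γ (hγ.trans hβ2) (hncatchγ _ _).1 hαγ) this
      · rw [min_eq_right hlt.le, max_eq_left hlt.le]
        by_contra hcon
        push_neg at hcon
        have hGr : Gr gh (qf β (h γ)) (qf β (h α)) := by
          refine ⟨hlt, ?_, hxw⟩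
          rw [hghx _ hyw]
          exact le_trans hcon (le_trans (le_max_left _ _) (le_of_lt (lt_add_one _)))
        have hT := tedge_of_gr hGr
        have := catchF_eq hgh hβ1 hβ2 hhγβ hT
        rw [qg_qf hβ1 hβ2 hhαβ] at this
        exact ((hDof _ (hmemF β hβ2 hβ1 _ _).1).2.2.2 γ (hγ.trans hβ2) (hncatchγ _ _).1
          α (hα.trans hβ2) (hncatchα _ _).1 (Ne.symm hαγ)) this
-- next point of a club, padded
def ghat (C : Set Ordi) : Ordi → Ordi := fun x =>
  if h : x < w1 ∧ sInf {c | c ∈ C ∧ x < c} < w1 then max (sInf {c | c ∈ C ∧ x < c}) x + 1 else 0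

lemma ghat_lt_w1 (C : Set Ordi) : ∀ x, ghat C x < w1 := by
  intro x
  unfold ghat
  split
  · rename_i hx; exact w1_isLimit.2 _ (max_lt hx.2 hx.1)
  · exact w1_pos

lemma ghat_spec {C : Set Ordi} (hC : IsClubIn C w1) {x : Ordi} (hx : x < w1) :
    sInf {c | c ∈ C ∧ x < c} ∈ C ∧ x < sInf {c | c ∈ C ∧ x < c} ∧
    sInf {c | c ∈ C ∧ x < c} < w1 ∧ ghat C x = max (sInf {c | c ∈ C ∧ x < c}) x + 1 := by
  have hne : {c | c ∈ C ∧ x < c}.Nonempty := by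
    obtain ⟨c, hc, hxc⟩ := hC.2.1 (x + 1) (w1_isLimit.2 x hx)
    exact ⟨c, hc, lt_of_lt_of_le (lt_add_one x) hxc⟩
  have hmem := csInf_mem hne
  have hlt : sInf {c | c ∈ C ∧ x < c} < w1 := hC.1 hmem.1
  exact ⟨hmem.1, hmem.2, hlt, dif_pos ⟨hx, hlt⟩⟩

def FFA (𝒞 : Set (Set Ordi)) :
    ((↥𝒞 × ↥(Set.Iio w2)) × ULift.{1} (ℕ × ℕ)) ⊕ PUnit.{2} → (Ordi → Ordi) := fun z =>
  match z with
  | Sum.inl ((C, b), u) =>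
      if w1 ≤ b.1 then catchF (ghat C.1) b.1 u.down.1 u.down.2 else id
  | Sum.inr _ => id

lemma FFA_eq {𝒞 : Set (Set Ordi)} {C : Set Ordi} (hC : C ∈ 𝒞) {b : Ordi} (hb2 : b < w2)
    (hb1 : w1 ≤ b) (i j : ℕ) :
    FFA 𝒞 (Sum.inl ((⟨C, hC⟩, ⟨b, hb2⟩), ULift.up (i, j))) = catchF (ghat C) b i j := by
  have hred : FFA 𝒞 (Sum.inl (((⟨C, hC⟩ : ↥𝒞), (⟨b, hb2⟩ : ↥(Set.Iio w2))), ULift.up (i, j)))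
      = if w1 ≤ b then catchF (ghat C) b i j else id := rfl
  rw [hred, if_pos hb1]

lemma FFA_props (𝒞 : Set (Set Ordi)) :
    ∀ f ∈ Set.range (FFA 𝒞), Set.InjOn f (Set.Iio w2) ∧ ∀ α < w2, f α < w2 := by
  rintro f ⟨z, rfl⟩
  rcases z with ⟨⟨C, b⟩, ⟨i, j⟩⟩ | u
  · have hred : FFA 𝒞 (Sum.inl ((C, b), ULift.up (i, j)))
        = if w1 ≤ b.1 then catchF (ghat C.1) b.1 i j else id := rfl
    rw [hred]
    by_cases hb1 : w1 ≤ b.1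
    · rw [if_pos hb1]
      exact ⟨catchF_injOn (ghat_lt_w1 C.1), fun α hα => catchF_lt b.2 hα⟩
    · rw [if_neg hb1]
      exact ⟨fun x _ y _ hxy => hxy, fun α hα => hα⟩
  · exact ⟨fun x _ y _ hxy => hxy, fun α hα => hα⟩

lemma FFA_card {𝒞 : Set (Set Ordi)} (hcard : #(↥𝒞) ≤ Cardinal.aleph 2) :
    #(↥(Set.range (FFA 𝒞))) ≤ (Cardinal.aleph 2 : Cardinal.{1}) := by
  refine famcard ?_ (FFA 𝒞)
  rw [Cardinal.mk_prod]
  simp only [Cardinal.lift_id]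
  have h2 : Cardinal.aleph0 ≤ (Cardinal.aleph 2 : Cardinal.{1}) := Cardinal.aleph0_le_aleph 2
  refine le_trans (Cardinal.mul_le_max _ _) ?_
  simp [max_le_iff, hcard, le_of_eq mk_Iio_w2, h2, w2]

theorem ssA (hss : StatementSS) : StatementA := by
  classical
  intro 𝒞 h𝒞 hcard
  obtain ⟨h, hWInj, hWMap, hav⟩ := hss (Set.range (FFA 𝒞)) (FFA_props 𝒞) (FFA_card hcard)
  set Fam := Set.range (FFA 𝒞) with hFamdef
  set Dof : (Ordi → Ordi) → Set Ordi := fun f => if hf : f ∈ Fam then (hav f hf).choose else ∅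
    with hDofdef
  have hDof : ∀ f, f ∈ Fam →
      Dof f ⊆ Set.Iio w2 ∧ (Dof f).Countable ∧
      (∀ α < w2, α ∉ Dof f → f α ≠ h α) ∧
      (∀ α < w2, α ∉ Dof f → ∀ γ < w2, γ ∉ Dof f → α ≠ γ → f (h α) ≠ h γ) := by
    intro f hf
    have heq : Dof f = (hav f hf).choose := by rw [hDofdef]; exact dif_pos hf
    rw [heq]
    exact (hav f hf).choose_spec
  -- pick β* in the closure club of h, above w1
  have hChclub : IsClubIn (clSet (fun _ => h) w2) w2 :=
    isClubIn_clSet isRegular_aleph_two (lt_trans aleph0_lt_aleph1 aleph1_lt_aleph2)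
      (fun _ x hx => hWMap x hx)
  obtain ⟨β, hβmem, hβ1⟩ := hChclub.2.1 w1 w1_lt_w2
  have hβ2 : β < w2 := hβmem.1
  have hβcl : ∀ α < β, h α < β := fun α hα => hβmem.2.2 0 α hα
  -- the uncountable trace R and the club E of its accumulation points
  set v : Ordi → Ordi := fun z => qf β (h (qg β z)) with hv
  have hvlt : ∀ z < w1, v z < w1 := fun z hz =>
    qf_lt hβ1 hβ2 (hβcl _ (qg_lt hβ1 hβ2 hz))
  have hvinj : Set.InjOn v (Set.Iio w1) := by
    intro z hz z' hz' hzz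
    have h1 : h (qg β z) = h (qg β z') := by
      refine qf_injOn hβ1 hβ2 (hβcl _ (qg_lt hβ1 hβ2 hz)) (hβcl _ (qg_lt hβ1 hβ2 hz')) hzz
    have h2 : qg β z = qg β z' :=
      hWInj ((qg_lt hβ1 hβ2 hz).trans hβ2) ((qg_lt hβ1 hβ2 hz').trans hβ2) h1
    rw [← qf_qg hβ1 hβ2 hz, ← qf_qg hβ1 hβ2 hz', h2]
  set R := v '' Set.Iio w1 with hR
  have hRsub : ∀ r ∈ R, r < w1 := by rintro r ⟨z, hz, rfl⟩; exact hvlt z hz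
  have hRnc : ¬ R.Countable := not_countable_image hvinj not_countable_Iio_w1
  have hRub : ∀ x < w1, ∃ r ∈ R, x ≤ r := by
    intro x hx
    obtain ⟨r, hr, hxr⟩ := unbounded_of_not_countable hRnc x hx
    exact ⟨r, hr, hxr.le⟩
  set E := {δ | δ < w1 ∧ 0 < δ ∧ ∀ x < δ, ∃ r ∈ R, x < r ∧ r < δ} with hE
  have hEclub : IsClubIn E w1 := by
    refine ⟨fun δ hδ => hδ.1, ?_, ?_⟩
    · intro a ha
      set d : ℕ → Ordi := fun m => (nxt R)^[m] a with hd
      have hdsucc : ∀ m, d (m + 1) = nxt R (d m) := by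
        intro m; rw [hd]; simp [Function.iterate_succ_apply']
      have hdlt : ∀ m, d m < w1 := by
        intro m
        induction m with
        | zero => exact ha
        | succ m ih =>
          rw [hdsucc]
          exact hRsub _ (nxt_spec hRub w1_isLimit ih).1
      have hdmono : ∀ m, d m < d (m + 1) := by
        intro m; rw [hdsucc]; exact (nxt_spec hRub w1_isLimit (hdlt m)).2
      have hdmem : ∀ m, d (m + 1) ∈ R := by
        intro m; rw [hdsucc]; exact (nxt_spec hRub w1_isLimit (hdlt m)).1
      set δ' := sSup (Set.range d) with hδ'
      have hbdd : BddAbove (Set.range d) :=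
        bddAbove_of_lt (κ := w1) (by rintro x ⟨m, rfl⟩; exact hdlt m)
      have hled : ∀ m, d m ≤ δ' := fun m => le_csSup hbdd ⟨m, rfl⟩
      have hδ'lt : δ' < w1 := by
        refine sSup_lt_of_countable ?_ w1_pos ?_ (Set.countable_range _)
        · rw [cof_w1]; exact aleph0_lt_aleph1
        · rintro x ⟨m, rfl⟩; exact hdlt m
      refine ⟨δ', ⟨hδ'lt, ?_, ?_⟩, ?_⟩
      · exact lt_of_le_of_lt (zero_le (a := d 0)) (lt_of_lt_of_le (hdmono 0) (hled 1))
      · intro x hx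
        obtain ⟨y, ⟨m, rfl⟩, hxy⟩ := exists_lt_of_lt_csSup (Set.range_nonempty d) hx
        refine ⟨d (m + 1), hdmem m, lt_trans hxy (hdmono m), ?_⟩
        exact lt_of_lt_of_le (hdmono (m + 1)) (hled (m + 2))
      · exact hled 0
    · intro δ hpos hδ happ
      refine ⟨hδ, hpos, ?_⟩
      intro x hx
      obtain ⟨γ, hγE, hxγ, hγδ⟩ := happ x hx
      obtain ⟨r, hr, hγr, hrγ⟩ := hγE.2.2 x hxγ
      exact ⟨r, hr, hγr, lt_trans hrγ hγδ⟩
  refine ⟨E, hEclub, ?_⟩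
  -- main point: E is almost contained in every C ∈ 𝒞
  intro C hC
  set J := ⋃ (i : ℕ), ⋃ (j : ℕ),
    (fun α => qf β (h α)) '' (Dof (catchF (ghat C) β i j) ∩ Set.Iio β) with hJ
  have hmemF : ∀ i j : ℕ, catchF (ghat C) β i j ∈ Fam := fun i j =>
    ⟨Sum.inl ((⟨C, hC⟩, ⟨β, hβ2⟩), ULift.up (i, j)), FFA_eq hC hβ2 hβ1 i j⟩
  have hJct : J.Countable := by
    refine Set.countable_iUnion (fun i => Set.countable_iUnion (fun j => ?_))
    exact (((hDof _ (hmemF i j)).2.1).mono Set.inter_subset_left).image _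
  have hJsub : ∀ x ∈ J, x < w1 := by
    intro x hx
    simp only [hJ, Set.mem_iUnion] at hx
    obtain ⟨i, j, α, ⟨_, hαβ⟩, rfl⟩ := hx
    exact qf_lt hβ1 hβ2 (hβcl α hαβ)
  set s := sSup J with hs
  have hslt : s < w1 := by
    refine sSup_lt_of_countable ?_ w1_pos hJsub hJct
    rw [cof_w1]; exact aleph0_lt_aleph1
  refine Set.Countable.mono ?_ (countable_Iic hslt)
  -- E \ C ⊆ Iic s
  intro δ hδ
  by_contra hδs
  rw [Set.mem_Iic, not_le] at hδs
  have hδE := hδ.1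
  have hδC := hδ.2
  refine hδC ((h𝒞 C hC).2.2 δ hδE.2.1 hδE.1 ?_)
  intro b hb
  obtain ⟨r, hrR, hrlt, hrδ⟩ := hδE.2.2 (max b s) (max_lt hb hδs)
  obtain ⟨r', hr'R, hrr', hr'δ⟩ := hδE.2.2 r hrδ
  obtain ⟨z, hz, rfl⟩ := hrR
  obtain ⟨z', hz', rfl⟩ := hr'R
  set a := qg β z with ha
  set a' := qg β z' with ha'
  have haβ : a < β := qg_lt hβ1 hβ2 hz
  have ha'β : a' < β := qg_lt hβ1 hβ2 hz'
  have haa' : a ≠ a' := by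
    intro heq
    rw [hv] at hrr'
    dsimp only at hrr'
    rw [← ha, ← ha', heq] at hrr'
    exact lt_irrefl _ hrr'
  have hnotDa : ∀ i j : ℕ, a ∉ Dof (catchF (ghat C) β i j) := by
    intro i j hmem
    have : v z ∈ J := by
      simp only [hJ, Set.mem_iUnion]
      exact ⟨i, j, a, ⟨hmem, haβ⟩, rfl⟩
    have : v z ≤ s := le_csSup (bddAbove_of_lt (κ := w1) hJsub) this
    exact absurd (lt_of_le_of_lt (le_max_right b s) hrlt) (not_lt.mpr this)
  have hnotDa' : ∀ i j : ℕ, a' ∉ Dof (catchF (ghat C) β i j) := by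
    intro i j hmem
    have : v z' ∈ J := by
      simp only [hJ, Set.mem_iUnion]
      exact ⟨i, j, a', ⟨hmem, ha'β⟩, rfl⟩
    have hle : v z' ≤ s := le_csSup (bddAbove_of_lt (κ := w1) hJsub) this
    have : s < v z' := lt_trans (lt_of_le_of_lt (le_max_right b s) hrlt) hrr'
    exact absurd this (not_lt.mpr hle)
  -- the next point of C above r is below r'
  have hrw1 : v z < w1 := hvlt z hz
  have hr'w1 : v z' < w1 := hvlt z' hz'
  obtain ⟨htC, hrt, htw1, hgeq⟩ := ghat_spec (h𝒞 C hC) hrw1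
  set t := sInf {c | c ∈ C ∧ v z < c} with ht
  have htr' : t < v z' := by
    by_contra hcon
    push_neg at hcon
    have hGr : Gr (ghat C) (v z) (v z') := by
      refine ⟨hrr', ?_, hr'w1⟩
      rw [hgeq]
      exact le_trans (le_trans hcon (le_max_left _ _)) (le_of_lt (lt_add_one _))
    have hT := tedge_of_gr hGr
    have hva : v z = qf β (h a) := rfl
    rw [hva] at hT
    have hCF := catchF_eq (ghat_lt_w1 C) hβ1 hβ2 (hβcl a haβ) hT
    rw [show v z' = qf β (h a') from rfl, qg_qf hβ1 hβ2 (hβcl a' ha'β)] at hCF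
    exact ((hDof _ (hmemF _ _)).2.2.2 a (haβ.trans hβ2) (hnotDa _ _)
      a' (ha'β.trans hβ2) (hnotDa' _ _) haa') hCF
  exact ⟨t, htC, lt_of_le_of_lt (le_max_left b s) (lt_trans hrlt hrt),
    lt_trans htr' hr'δ⟩
-- inverse of the bijections pi
def piInv (pi : Ordi → Ordi → Ordi) (β : Ordi) : Ordi → Ordi := fun y =>
  if h : ∃ α, α < β ∧ pi β α = y then Classical.choose h else 0

section piInvSec
variable {pi : Ordi → Ordi → Ordi} {β : Ordi}

lemma piInv_spec (hbij : Set.BijOn (pi β) (Set.Iio β) (Set.Iio w1)) {y : Ordi} (hy : y < w1) :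
    piInv pi β y < β ∧ pi β (piInv pi β y) = y := by
  obtain ⟨α, hα, hpiα⟩ := hbij.2.2 hy
  have hex : ∃ α, α < β ∧ pi β α = y := ⟨α, hα, hpiα⟩
  have hch := Classical.choose_spec hex
  unfold piInv
  rw [dif_pos hex]
  exact hch

lemma piInv_pi (hbij : Set.BijOn (pi β) (Set.Iio β) (Set.Iio w1)) {α : Ordi} (hα : α < β) :
    piInv pi β (pi β α) = α := by
  have hsp := piInv_spec hbij (hbij.1 hα)
  exact hbij.2.1 hsp.1 hα hsp.2

end piInvSec

def psiF (pi : Ordi → Ordi → Ordi) (f : Ordi → Ordi) (β : Ordi) : Ordi → Ordi := fun x =>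
  if h : x < w1 ∧ f (piInv pi β x) < β then pi β (f (piInv pi β x)) else 0

def psiG (pi : Ordi → Ordi → Ordi) (f : Ordi → Ordi) (β : Ordi) : Ordi → Ordi := fun x =>
  if h : x < w1 ∧ ∃ α, α < β ∧ f α = piInv pi β x then pi β (Classical.choose h.2) else 0

def kFam (pi : Ordi → Ordi → Ordi) (f : Ordi → Ordi) (β : Ordi) : ℕ → Ordi → Ordi := fun n =>
  match n with
  | 0 => psiF pi f β
  | _ + 1 => psiG pi f β

lemma kFam_lt {pi : Ordi → Ordi → Ordi} {f : Ordi → Ordi} {β : Ordi}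
    (hbij : Set.BijOn (pi β) (Set.Iio β) (Set.Iio w1)) :
    ∀ (n : ℕ) (x : Ordi), kFam pi f β n x < w1 := by
  intro n x
  match n with
  | 0 =>
    show psiF pi f β x < w1
    unfold psiF
    split
    · rename_i hx; exact hbij.1 hx.2
    · exact w1_pos
  | m + 1 =>
    show psiG pi f β x < w1
    unfold psiG
    split
    · rename_i hx
      exact hbij.1 (Classical.choose_spec hx.2).1
    · exact w1_pos

def Dcl (pi : Ordi → Ordi → Ordi) (f : Ordi → Ordi) (β : Ordi) : Set Ordi :=
  clSet (kFam pi f β) w1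

lemma Dcl_club {pi : Ordi → Ordi → Ordi} {f : Ordi → Ordi} {β : Ordi}
    (hbij : Set.BijOn (pi β) (Set.Iio β) (Set.Iio w1)) : IsClubIn (Dcl pi f β) w1 :=
  isClubIn_clSet Cardinal.isRegular_aleph_one aleph0_lt_aleph1
    (fun n x _ => kFam_lt hbij n x)

theorem abSS (hA : StatementA) (hB : StatementB) : StatementSS := by
  classical
  obtain ⟨pi, hpi, hBg⟩ := hB
  intro F hF hcard
  -- the family of clubs to diagonalize
  set 𝒞A := Set.range (fun p : ↥F × ↥(Set.Iio w2) =>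
    if w1 ≤ p.2.1 then Dcl pi p.1.1 p.2.1 else Set.Iio w1) with h𝒞A
  have h𝒞club : ∀ D ∈ 𝒞A, IsClubIn D w1 := by
    rintro D ⟨⟨f, b⟩, rfl⟩
    dsimp only
    split
    · rename_i hb1
      exact Dcl_club (hpi b.1 hb1 b.2)
    · exact isClubIn_Iio
  have h𝒞card : #(↥𝒞A) ≤ (Cardinal.aleph 2 : Cardinal.{1}) := by
    refine le_trans Cardinal.mk_range_le ?_
    rw [Cardinal.mk_prod]
    simp only [Cardinal.lift_id]
    have h2 : Cardinal.aleph0 ≤ (Cardinal.aleph 2 : Cardinal.{1}) := Cardinal.aleph0_le_aleph 2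
    refine le_trans (Cardinal.mul_le_max _ _) ?_
    simp [max_le_iff, hcard, le_of_eq mk_Iio_w2, h2, w2]
  obtain ⟨E, hEclub, hEdiag⟩ := hA 𝒞A h𝒞club h𝒞card
  -- g = next element of E
  set g : Ordi → Ordi := fun x => if x < w1 then sInf {e | e ∈ E ∧ x < e} else 0 with hgdef
  have hgspec : ∀ x < w1, g x ∈ E ∧ x < g x ∧ g x < w1 := by
    intro x hx
    have hne : {e | e ∈ E ∧ x < e}.Nonempty := by
      obtain ⟨c, hc, hxc⟩ := hEclub.2.1 (x + 1) (w1_isLimit.2 x hx)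
      exact ⟨c, hc, lt_of_lt_of_le (lt_add_one x) hxc⟩
    have hmem := csInf_mem hne
    have hgx : g x = sInf {e | e ∈ E ∧ x < e} := if_pos hx
    rw [hgx]
    exact ⟨hmem.1, hmem.2, hEclub.1 hmem.1⟩
  have hgw1 : ∀ i < w1, g i < w1 := fun i hi => (hgspec i hi).2.2
  obtain ⟨h, hWInj, hWMap, I, hIsub, hIstat, hIcl, hID⟩ := hBg g hgw1
  refine ⟨h, hWInj, hWMap, ?_⟩
  intro f hf
  have hfInj := (hF f hf).1
  have hfMap := (hF f hf).2
  have hIunb : ∀ x < w2, ∃ β ∈ I, x < β := by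
    intro x hx
    obtain ⟨β, hβ⟩ := hIstat.2 _ (isClubIn_tail w2_isLimit hx)
    exact ⟨β, hβ.1, hβ.2.1⟩
  have hgood : ∀ β ∈ I, w1 ≤ β ∧ β < w2 := by
    intro β hβ
    have hS := hIsub hβ
    refine ⟨?_, hS.1⟩
    by_contra hcon
    push_neg at hcon
    have h1 : β.cof ≤ β.card := Ordinal.cof_le_card β
    have h2 : β.card < Cardinal.aleph 1 := Cardinal.lt_ord.mp hcon
    rw [hS.2] at h1
    exact absurd (lt_of_le_of_lt h1 h2) (lt_irrefl _)
  have hDmem : ∀ β, w1 ≤ β → ∀ h2 : β < w2, Dcl pi f β ∈ 𝒞A := by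
    intro β h1 h2
    refine ⟨(⟨f, hf⟩, ⟨β, h2⟩), ?_⟩
    dsimp only
    rw [if_pos h1]
  -- the junk bound below which E may escape Dcl
  set sjunk : Ordi → Ordi := fun β => sSup (E \ Dcl pi f β) with hsjunk
  have hsjlt : ∀ β, w1 ≤ β → β < w2 → sjunk β < w1 := by
    intro β h1 h2
    refine sSup_lt_of_countable ?_ w1_pos (fun x hx => hEclub.1 hx.1)
      (hEdiag _ (hDmem β h1 h2))
    rw [cof_w1]; exact aleph0_lt_aleph1
  -- capture: pairs (pi a, pi b) with f a = b can never satisfy the oscillation inequality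
  have hcap : ∀ β, w1 ≤ β → β < w2 → ∀ a b, a < β → b < β → f a = b →
      sjunk β < pi β a → sjunk β < pi β b →
      ¬ (g (min (pi β a) (pi β b)) < max (pi β a) (pi β b)) := by
    intro β h1 h2 a b haβ hbβ hfab hja hjb
    have hbij := hpi β h1 h2
    have hpa : pi β a < w1 := hbij.1 haβ
    have hpb : pi β b < w1 := hbij.1 hbβ
    have hInDcl : ∀ x, sjunk β < x → g x ∈ E → g x > x → g x ∈ Dcl pi f β := by
      intro x hjx hgE hgx
      by_contra hnot
      have hmem : g x ∈ E \ Dcl pi f β := ⟨hgE, hnot⟩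
      have hle : g x ≤ sjunk β :=
        le_csSup (bddAbove_of_lt (κ := w1) (fun y hy => hEclub.1 hy.1)) hmem
      exact absurd (lt_trans hjx hgx) (not_lt.mpr hle)
    rcases lt_trichotomy (pi β a) (pi β b) with hlt | heq | hlt
    · rw [min_eq_left hlt.le, max_eq_right hlt.le]
      intro hcon
      have hg := hgspec (pi β a) hpa
      have hgD : g (pi β a) ∈ Dcl pi f β := hInDcl _ hja hg.1 hg.2.1
      have hcl := hgD.2.2 0 (pi β a) hg.2.1
      have hval : kFam pi f β 0 (pi β a) = pi β b := by
        show psiF pi f β (pi β a) = pi β b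
        unfold psiF
        have hpiinv : piInv pi β (pi β a) = a := piInv_pi hbij haβ
        simp only [hpiinv]
        rw [hfab, dif_pos ⟨hpa, hbβ⟩]
      rw [hval] at hcl
      exact absurd hcon (not_lt.mpr hcl.le)
    · have hab : a = b := hbij.2.1 haβ hbβ heq
      rw [heq, min_self, max_self]
      intro hcon
      exact absurd hcon (not_lt.mpr (le_of_lt (hgspec _ hpb).2.1))
    · rw [min_eq_right hlt.le, max_eq_left hlt.le]
      intro hcon
      have hg := hgspec (pi β b) hpb
      have hgD : g (pi β b) ∈ Dcl pi f β := hInDcl _ hjb hg.1 hg.2.1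
      have hcl := hgD.2.2 1 (pi β b) hg.2.1
      have hval : kFam pi f β 1 (pi β b) = pi β a := by
        show psiG pi f β (pi β b) = pi β a
        unfold psiG
        have hpiinv : piInv pi β (pi β b) = b := piInv_pi hbij hbβ
        simp only [hpiinv]
        have hex : ∃ α, α < β ∧ f α = b := ⟨a, haβ, hfab⟩
        rw [dif_pos ⟨hpb, hex⟩]
        have hch := Classical.choose_spec hex
        have hcha : Classical.choose hex = a :=
          hfInj (hch.1.trans h2) (haβ.trans h2) (hch.2.trans hfab.symm)
        exact congrArg (pi β) hcha
      rw [hval] at hcl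
      exact absurd hcon (not_lt.mpr hcl.le)
  -- small exception sets at a given β ∈ I
  have hsmall1 : ∀ β, w1 ≤ β → β < w2 → {α | α < β ∧ pi β α ≤ sjunk β}.Countable := by
    intro β h1 h2
    have hbij := hpi β h1 h2
    refine countable_of_image_countable (u := pi β) (hbij.2.1.mono (fun α hα => hα.1)) ?_
    refine Set.Countable.mono ?_ (countable_Iic (hsjlt β h1 h2))
    rintro y ⟨α, ⟨hαβ, hαs⟩, rfl⟩
    exact hαs
  have hsmall2 : ∀ β ∈ I, {α | α < β ∧ pi β (h α) ≤ sjunk β}.Countable := by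
    intro β hβI
    obtain ⟨h1, h2⟩ := hgood β hβI
    have hbij := hpi β h1 h2
    have hinj : Set.InjOn (fun α => pi β (h α)) {α | α < β ∧ pi β (h α) ≤ sjunk β} := by
      intro x hx y hy hxy
      have hhx : h x < β := hIcl β hβI x hx.1
      have hhy : h y < β := hIcl β hβI y hy.1
      have : h x = h y := hbij.2.1 hhx hhy hxy
      exact hWInj (hx.1.trans h2) (hy.1.trans h2) this
    refine countable_of_image_countable hinj ?_
    refine Set.Countable.mono ?_ (countable_Iic (hsjlt β h1 h2))
    rintro y ⟨α, ⟨hαβ, hαs⟩, rfl⟩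
    exact hαs
  -- nonempty difference helper
  have hpick : ∀ S X : Set Ordi, ¬ S.Countable → X.Countable → ∃ α ∈ S, α ∉ X := by
    intro S X hS hX
    by_contra hcon
    push_neg at hcon
    exact hS (hX.mono hcon)
  -- Bad1 is countable
  set Bad1 := {α | α < w2 ∧ f α = h α} with hBad1
  have hBad1ct : Bad1.Countable := by
    by_contra hB1
    obtain ⟨β₀, hβ₀2, hβ₀nc⟩ := exists_uncountable_initial (fun α hα => hα.1) hB1
    obtain ⟨β, hβI, hβgt⟩ := hIunb β₀ hβ₀2
    obtain ⟨h1, h2⟩ := hgood β hβI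
    obtain ⟨Dβ, hDβsub, hDβct, hBi, _⟩ := hID β hβI
    have hnc : ¬ (Bad1 ∩ Set.Iio β).Countable := fun hc =>
      hβ₀nc (hc.mono (Set.inter_subset_inter_right _ (Set.Iio_subset_Iio hβgt.le)))
    obtain ⟨α, hαmem, hαX⟩ := hpick (Bad1 ∩ Set.Iio β)
      (Dβ ∪ ({α | α < β ∧ pi β α ≤ sjunk β} ∪ {α | α < β ∧ pi β (h α) ≤ sjunk β}))
      hnc (hDβct.union ((hsmall1 β h1 h2).union (hsmall2 β hβI)))
    have hαβ : α < β := hαmem.2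
    have hαD : α ∉ Dβ := fun hx => hαX (Or.inl hx)
    have hj1 : sjunk β < pi β α := by
      by_contra hcon
      push_neg at hcon
      exact hαX (Or.inr (Or.inl ⟨hαβ, hcon⟩))
    have hj2 : sjunk β < pi β (h α) := by
      by_contra hcon
      push_neg at hcon
      exact hαX (Or.inr (Or.inr ⟨hαβ, hcon⟩))
    exact hcap β h1 h2 α (h α) hαβ (hIcl β hβI α hαβ) hαmem.1.2 hj1 hj2 (hBi α hαβ hαD)
  -- witness function for Bad2a
  set w : Ordi → Ordi := fun α =>
    if hα : ∃ γ, γ < w2 ∧ γ ≠ α ∧ f (h α) = h γ then Classical.choose hα else 0 with hwdef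
  set Bad2a := {α | α < w2 ∧ ∃ γ, γ < w2 ∧ γ ≠ α ∧ f (h α) = h γ} with hBad2a
  have hw : ∀ α ∈ Bad2a, w α < w2 ∧ w α ≠ α ∧ f (h α) = h (w α) := by
    intro α hα
    have hex := hα.2
    have : w α = Classical.choose hex := by rw [hwdef]; exact dif_pos hex
    rw [this]
    exact Classical.choose_spec hex
  have hwinj : Set.InjOn w Bad2a := by
    intro x hx y hy hxy
    have hwx := hw x hx
    have hwy := hw y hy
    have h1 : f (h x) = f (h y) := by
      rw [hwx.2.2, hwy.2.2, hxy]
    have h2 : h x = h y := hfInj (hWMap x hx.1) (hWMap y hy.1) h1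
    exact hWInj hx.1 hy.1 h2
  have hBad2act : Bad2a.Countable := by
    by_contra hB2
    obtain ⟨β₀, hβ₀2, hβ₀nc⟩ := exists_uncountable_initial (fun α hα => hα.1) hB2
    have hWnc : ¬ (w '' (Bad2a ∩ Set.Iio β₀)).Countable :=
      not_countable_image (hwinj.mono Set.inter_subset_left) hβ₀nc
    have hWsub : w '' (Bad2a ∩ Set.Iio β₀) ⊆ Set.Iio w2 := by
      rintro y ⟨α, hα, rfl⟩
      exact (hw α hα.1).1
    obtain ⟨β₁, hβ₁2, hβ₁nc⟩ := exists_uncountable_initial hWsub hWnc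
    set S' := {α | α ∈ Bad2a ∧ α < β₀ ∧ w α < β₁} with hS'
    have hS'nc : ¬ S'.Countable := by
      intro hc
      refine hβ₁nc (Set.Countable.mono ?_ (hc.image w))
      rintro y ⟨⟨α, ⟨hαB, hαβ₀⟩, rfl⟩, hyβ₁⟩
      exact ⟨α, ⟨hαB, hαβ₀, hyβ₁⟩, rfl⟩
    obtain ⟨β, hβI, hβgt⟩ := hIunb (max β₀ β₁)
      (max_lt hβ₀2 hβ₁2)
    obtain ⟨h1, h2⟩ := hgood β hβI
    obtain ⟨Dβ, hDβsub, hDβct, _, hBii⟩ := hID β hβI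
    have hβ₀β : β₀ < β := lt_of_le_of_lt (le_max_left _ _) hβgt
    have hβ₁β : β₁ < β := lt_of_le_of_lt (le_max_right _ _) hβgt
    -- exception set
    have hXct : (Dβ ∪ ({α | α < β ∧ pi β (h α) ≤ sjunk β} ∪
        ({α | α ∈ S' ∧ w α ∈ Dβ} ∪ {α | α ∈ S' ∧ pi β (h (w α)) ≤ sjunk β}))).Countable := by
      refine hDβct.union ((hsmall2 β hβI).union (Set.Countable.union ?_ ?_))
      · refine countable_of_image_countable (hwinj.mono (fun α hα => hα.1.1)) ?_
        refine hDβct.mono ?_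
        rintro y ⟨α, ⟨_, hαD⟩, rfl⟩
        exact hαD
      · refine countable_of_image_countable (hwinj.mono (fun α hα => hα.1.1)) ?_
        refine (hsmall2 β hβI).mono ?_
        rintro y ⟨α, ⟨hαS', hαs⟩, rfl⟩
        exact ⟨lt_trans hαS'.2.2 hβ₁β, hαs⟩
    obtain ⟨α, hαS', hαX⟩ := hpick S' _ hS'nc hXct
    set γ := w α with hγdef
    have hαB : α ∈ Bad2a := hαS'.1
    have hwα := hw α hαB
    have hαβ : α < β := lt_trans hαS'.2.1 hβ₀β
    have hγβ : γ < β := lt_trans hαS'.2.2 hβ₁β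
    have hαγ : α ≠ γ := fun he => hwα.2.1 he.symm
    have hαD : α ∉ Dβ := fun hx => hαX (Or.inl hx)
    have hγD : γ ∉ Dβ := fun hx => hαX (Or.inr (Or.inr (Or.inl ⟨hαS', hx⟩)))
    have hj1 : sjunk β < pi β (h α) := by
      by_contra hcon
      push_neg at hcon
      exact hαX (Or.inr (Or.inl ⟨hαβ, hcon⟩))
    have hj2 : sjunk β < pi β (h γ) := by
      by_contra hcon
      push_neg at hcon
      exact hαX (Or.inr (Or.inr (Or.inr ⟨hαS', hcon⟩)))
    refine hcap β h1 h2 (h α) (h γ) (hIcl β hβI α hαβ) (hIcl β hβI γ hγβ) hwα.2.2 hj1 hj2 ?_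
    exact hBii α hαβ hαD γ hγβ hγD hαγ
  -- Bad2b is contained in the image of Bad2a
  set Bad2b := {γ | γ < w2 ∧ ∃ α, α < w2 ∧ α ≠ γ ∧ f (h α) = h γ} with hBad2b
  have hBad2bct : Bad2b.Countable := by
    refine Set.Countable.mono ?_ (hBad2act.image w)
    rintro γ ⟨hγ2, α, hα2, hαγ, hfαγ⟩
    have hαB : α ∈ Bad2a := ⟨hα2, γ, hγ2, Ne.symm hαγ, hfαγ⟩
    refine ⟨α, hαB, ?_⟩
    have hwα := hw α hαB
    have : h (w α) = h γ := by rw [← hwα.2.2, hfαγ]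
    exact hWInj hwα.1 hγ2 this
  -- conclusion
  refine ⟨Bad1 ∪ Bad2a ∪ Bad2b, ?_, (hBad1ct.union hBad2act).union hBad2bct, ?_, ?_⟩
  · rintro α ((hα | hα) | hα) <;> exact hα.1
  · intro α hα2 hαD hfa
    exact hαD (Or.inl (Or.inl ⟨hα2, hfa⟩))
  · intro α hα2 hαD γ hγ2 hγD hαγ hfa
    exact hαD (Or.inl (Or.inr ⟨hα2, γ, hγ2, Ne.symm hαγ, hfa⟩))

end ABStar

/-- The conjunction of statements (A) and (B) is equivalent to statement (**). -/
theorem statementA_and_B_iff_starstar :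
    (StatementA ∧ StatementB) ↔ StatementSS :=
  ⟨fun hab => ABStar.abSS hab.1 hab.2, fun hss => ⟨ABStar.ssA hss, ABStar.ssB hss⟩⟩

end
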